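/- For each integer k ≥ 3, define α_1(k) = inf_{x∈(1/k,1)} ξ_1(x)/ψ(x), where ξ_1(x) = (1/(k−1))·(−log x − (k−1)·log((1−x)/(k−1)) + k·(x·log x + (1−x)·log((1−x)/(k−1)))); this is the 1-log-Sobolev constant of the Potts semigroup on [k]. Then lim_{k→∞} (log k)·( ((k−1)/k)·α_1(k) − 1 ) = 1; in other words, α_1(k) = (k/(k−1))·(1 + (1+o(1))/log k) as k → ∞. -/

import Mathlib

open scoped BigOperators

/-- `ψ(x) = log k + x log x + (1-x) log((1-x)/(k-1))`. -/
noncomputable def psi (k : ℕ) (x : ℝ) : ℝ :=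
  Real.log (k : ℝ) + x * Real.log x + (1 - x) * Real.log ((1 - x) / ((k : ℝ) - 1))

/-- `ξ_1(x)`. -/
noncomputable def xi1 (k : ℕ) (x : ℝ) : ℝ :=
  (1 / ((k : ℝ) - 1)) *
    (-Real.log x - ((k : ℝ) - 1) * Real.log ((1 - x) / ((k : ℝ) - 1))
      + (k : ℝ) * (x * Real.log x + (1 - x) * Real.log ((1 - x) / ((k : ℝ) - 1))))

/-- The 1-log-Sobolev constant of the Potts semigroup on `[k]`. -/
noncomputable def alpha1 (k : ℕ) : ℝ :=
  sInf {r : ℝ | ∃ x ∈ Set.Ioo (1 / (k : ℝ)) 1, r = xi1 k x / psi k x}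

open Real Filter

-- numeric exp/log facts
lemma exp_001 : Real.exp 0.01 ≤ 100/99 := by
  have h1 : (0.99:ℝ) ≤ Real.exp (-0.01) := by
    have := Real.add_one_le_exp (-0.01 : ℝ); linarith
  have h2 : Real.exp 0.01 * Real.exp (-0.01) = 1 := by
    rw [← Real.exp_add]; norm_num
  nlinarith [Real.exp_pos (0.01:ℝ)]

lemma exp_101 : Real.exp 1.01 ≤ 2.746 := by
  have h : Real.exp 1.01 = Real.exp 1 * Real.exp 0.01 := by
    rw [← Real.exp_add]; norm_num
  have h2 := exp_001
  have h3 := Real.exp_one_lt_d9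
  rw [h]
  nlinarith [Real.exp_pos (0.01:ℝ), Real.exp_pos (1:ℝ)]

lemma log_53 : (0.505:ℝ) ≤ Real.log (5/3) := by
  rw [Real.le_log_iff_exp_le (by norm_num)]
  have hsq : Real.exp 0.505 * Real.exp 0.505 = Real.exp 1.01 := by
    rw [← Real.exp_add]; norm_num
  nlinarith [Real.exp_pos (0.505:ℝ), exp_101]

lemma exp_02 : Real.exp 0.2 ≤ 1.25 := by
  have h1 : (0.8:ℝ) ≤ Real.exp (-0.2) := by
    have := Real.add_one_le_exp (-0.2 : ℝ); linarith
  have h2 : Real.exp 0.2 * Real.exp (-0.2) = 1 := by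
    rw [← Real.exp_add]; norm_num
  nlinarith [Real.exp_pos (0.2:ℝ)]

lemma log_52 : (0.9:ℝ) ≤ Real.log (5/2) := by
  rw [Real.le_log_iff_exp_le (by norm_num)]
  have hsq : Real.exp 0.9 * Real.exp 0.9 = Real.exp 1 * Real.exp 1 * Real.exp (-0.2) := by
    rw [← Real.exp_add, ← Real.exp_add, ← Real.exp_add]; norm_num
  have h1 : Real.exp (-0.2) ≤ 1/1.2 := by
    have h2 : Real.exp 0.2 * Real.exp (-0.2) = 1 := by rw [← Real.exp_add]; norm_num
    have := Real.add_one_le_exp (0.2:ℝ)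
    nlinarith [Real.exp_pos (-0.2:ℝ)]
  have h3 := Real.exp_one_lt_d9
  nlinarith [Real.exp_pos (0.9:ℝ), Real.exp_pos (1:ℝ), Real.exp_pos (-0.2:ℝ)]

lemma log_203 : (1.01:ℝ) ≤ Real.log (20/3) := by
  rw [Real.le_log_iff_exp_le (by norm_num)]
  linarith [exp_101]

lemma exp_n06 : (0.54:ℝ) ≤ Real.exp (-0.6) := by
  have hsq : Real.exp 0.6 * Real.exp 0.6 = Real.exp 1 * Real.exp 0.2 := by
    rw [← Real.exp_add, ← Real.exp_add]; norm_num
  have h06 : Real.exp 0.6 ≤ 50/27 := by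
    nlinarith [Real.exp_pos (0.6:ℝ), Real.exp_pos (1:ℝ), exp_02, Real.exp_one_lt_d9,
      Real.exp_pos (0.2:ℝ)]
  have h2 : Real.exp 0.6 * Real.exp (-0.6) = 1 := by rw [← Real.exp_add]; norm_num
  nlinarith [Real.exp_pos (0.6:ℝ), Real.exp_pos (-0.6:ℝ)]

-- log(1+y) ≤ y - y²/5 on [0,1]
lemma log1p_le_quad {y : ℝ} (h0 : 0 ≤ y) (h1 : y ≤ 1) :
    Real.log (1 + y) ≤ y - y^2/5 := by
  rw [Real.log_le_iff_le_exp (by linarith)]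
  have hz : (0:ℝ) ≤ y - y^2/5 := by nlinarith
  have := Real.quadratic_le_exp_of_nonneg hz
  nlinarith

set_option maxHeartbeats 2000000 in
lemma main_real (lam K y : ℝ) (hlam : 1000 ≤ lam) (hK : K = Real.exp lam - 1)
    (hy0 : 0 < y) (hyK : y < K) :
    (lam + 1 + y) * Real.log (1 + y) ≤ (lam * K + (K - y)) * Real.log (K / (K - y)) := by
  have hKbig : 10 * lam^2 + lam + 1 ≤ K := by
    have hs := Real.sum_le_exp_of_nonneg (by linarith : (0:ℝ) ≤ lam) 4
    norm_num [Finset.sum_range_succ, Nat.factorial] at hs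
    nlinarith [mul_le_mul_of_nonneg_right hlam (by linarith : (0:ℝ) ≤ lam),
      mul_le_mul_of_nonneg_right hlam (sq_nonneg lam)]
  have hK0 : (0:ℝ) < K := by nlinarith
  have hKy : (0:ℝ) < K - y := by linarith
  have hratio_pos : (0:ℝ) < K / (K - y) := by positivity
  -- s lower bound: y/K ≤ log(K/(K-y))
  have hs_lin : y / K ≤ Real.log (K / (K - y)) := by
    have h1 := Real.one_sub_inv_le_log_of_pos hratio_pos
    have h2 : (K / (K - y))⁻¹ = (K - y) / K := by
      rw [inv_div]
    rw [h2] at h1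
    have h3 : 1 - (K - y)/K = y/K := by field_simp; ring
    linarith [h3 ▸ h1]
  have hs0 : (0:ℝ) ≤ Real.log (K / (K - y)) := le_trans (by positivity) hs_lin
  have hcoef : (0:ℝ) ≤ lam * K + (K - y) := by nlinarith
  have hlogy_lam : Real.log (1 + y) ≤ lam := by
    rw [Real.log_le_iff_le_exp (by linarith)]
    rw [hK] at hyK; linarith
  have hexpand : (lam * K + (K - y)) * (y / K) = y * lam + y - y^2/K := by
    field_simp; ring
  have hstep : (lam * K + (K - y)) * (y / K) ≤ (lam * K + (K - y)) * Real.log (K / (K - y)) :=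
    mul_le_mul_of_nonneg_left hs_lin hcoef
  rcases le_or_gt y 1 with h1 | h1
  · -- case A : y ≤ 1
    have hq := log1p_le_quad hy0.le h1
    have hfrac : y^2 / K ≤ y^2 := by
      apply div_le_self (by positivity) (by nlinarith)
    calc (lam + 1 + y) * Real.log (1 + y) ≤ (lam + 1 + y) * (y - y^2/5) := by
          apply mul_le_mul_of_nonneg_left hq (by linarith)
      _ ≤ (lam * K + (K - y)) * (y / K) := by
          rw [hexpand]
          nlinarith [hfrac, sq_nonneg y, mul_pos hy0 hy0, mul_pos (mul_pos hy0 hy0) hy0, hlam]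
      _ ≤ _ := hstep
  rcases le_or_gt y (0.44*(lam+1)) with h2 | h2
  · -- case B1a : 1 < y ≤ 0.44(lam+1)
    have hq : Real.log (1 + y) ≤ 0.6931471808 * y := by
      have e : Real.log (1+y) = Real.log 2 + Real.log ((1+y)/2) := by
        rw [← Real.log_mul (by norm_num) (by positivity)]
        congr 1; ring
      have h3 := Real.log_le_sub_one_of_pos (show (0:ℝ) < (1+y)/2 by positivity)
      have h4 := Real.log_two_lt_d9
      rw [e]; nlinarith
    have hyK' : y ≤ 0.001 * K := by nlinarith
    have hfrac : y^2 / K ≤ 0.001 * y := by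
      rw [div_le_iff₀ hK0]; nlinarith
    calc (lam + 1 + y) * Real.log (1 + y) ≤ (lam + 1 + y) * (0.6931471808 * y) := by
          apply mul_le_mul_of_nonneg_left hq (by linarith)
      _ ≤ (lam * K + (K - y)) * (y / K) := by
          rw [hexpand]
          nlinarith [hfrac, mul_le_mul_of_nonneg_right h2 hy0.le, hy0, hlam]
      _ ≤ _ := hstep
  rcases le_or_gt y (lam^2) with h3 | h3
  · -- case B1b : 0.44(lam+1) < y ≤ lam²
    set r := Real.sqrt lam with hr
    have hr2 : r^2 = lam := Real.sq_sqrt (by linarith)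
    have hr31 : (31:ℝ) ≤ r := by nlinarith [Real.sqrt_nonneg lam]
    have hq : Real.log (1 + y) ≤ 6 * r := by
      have h5 : (1:ℝ) + y ≤ lam^3 := by nlinarith
      have h6 : Real.log (1+y) ≤ Real.log (lam^3) :=
        Real.log_le_log (by linarith) h5
      have h7 : Real.log (lam^3) = 3 * Real.log lam := by
        rw [Real.log_pow]; norm_num
      have h8 : Real.log lam = 2 * Real.log r := by
        rw [← hr2, Real.log_pow]; norm_num
      have h9 : Real.log r ≤ r - 1 := Real.log_le_sub_one_of_pos (by nlinarith)
      calc Real.log (1+y) ≤ Real.log (lam^3) := h6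
        _ = 3 * Real.log lam := h7
        _ = 6 * Real.log r := by rw [h8]; ring
        _ ≤ 6 * r := by linarith
    have hfrac : y^2 / K ≤ 0.1 * y := by
      rw [div_le_iff₀ hK0]; nlinarith
    have ha : 6*r*(lam+1+y) ≤ 20*r*y := by
      nlinarith [mul_le_mul_of_nonneg_left h2.le (by positivity : (0:ℝ) ≤ 6*r)]
    have hb : 20*r*y ≤ lam*y := by
      have h20 : 20*r ≤ lam := by nlinarith
      exact mul_le_mul_of_nonneg_right h20 hy0.le
    calc (lam + 1 + y) * Real.log (1 + y) ≤ (lam + 1 + y) * (6*r) := by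
          apply mul_le_mul_of_nonneg_left hq (by linarith)
      _ ≤ (lam * K + (K - y)) * (y / K) := by rw [hexpand]; nlinarith [ha, hb, hfrac, hy0]
      _ ≤ _ := hstep
  rcases le_or_gt y (0.4*K) with h4 | h4
  · -- case 4 : lam² < y ≤ 0.4 K
    have hq : Real.log (1 + y) ≤ lam - 0.6 := by
      rw [Real.log_le_iff_le_exp (by linarith)]
      have e : Real.exp (lam - 0.6) = (K+1) * Real.exp (-0.6) := by
        rw [Real.exp_sub, hK]
        have : Real.exp lam - 1 + 1 = Real.exp lam := by ring
        rw [this, Real.exp_neg]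
        field_simp
      rw [e]
      nlinarith [mul_le_mul_of_nonneg_left exp_n06 (by linarith : (0:ℝ) ≤ K+1)]
    have hfrac : y^2 / K ≤ 0.4 * y := by
      rw [div_le_iff₀ hK0]; nlinarith
    calc (lam + 1 + y) * Real.log (1 + y) ≤ (lam + 1 + y) * (lam - 0.6) := by
          apply mul_le_mul_of_nonneg_left hq (by linarith)
      _ ≤ (lam * K + (K - y)) * (y / K) := by
          rw [hexpand]
          nlinarith [hfrac, h3, hlam, mul_le_mul_of_nonneg_right hlam (by linarith : (0:ℝ) ≤ lam)]
      _ ≤ _ := hstep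
  · -- tail : y > 0.4 K ; suffices lam+1+y ≤ K * s
    have key : lam + 1 + y ≤ K * Real.log (K / (K - y)) := by
      have hsbound : ∀ c σ : ℝ, K - y ≤ c * K → 0 < c → σ ≤ Real.log (1/c) →
          σ ≤ Real.log (K / (K - y)) := by
        intro c σ hc hc0 hσ
        refine le_trans hσ (Real.log_le_log (by positivity) ?_)
        rw [div_le_div_iff₀ hc0 hKy]
        nlinarith
      rcases le_or_gt y (0.5*K) with h5 | h5
      · have hs : (0.505:ℝ) ≤ Real.log (K/(K-y)) := by
          apply hsbound 0.6 _ (by linarith) (by norm_num)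
          have : (1:ℝ)/0.6 = 5/3 := by norm_num
          rw [this]; exact log_53
        nlinarith [mul_le_mul_of_nonneg_left hs hK0.le,
          mul_le_mul_of_nonneg_right hlam (by linarith : (0:ℝ) ≤ lam)]
      rcases le_or_gt y (0.6*K) with h6 | h6
      · have hs : (0.6931:ℝ) ≤ Real.log (K/(K-y)) := by
          apply hsbound 0.5 _ (by linarith) (by norm_num)
          have : (1:ℝ)/0.5 = 2 := by norm_num
          rw [this]; linarith [Real.log_two_gt_d9]
        nlinarith [mul_le_mul_of_nonneg_left hs hK0.le,
          mul_le_mul_of_nonneg_right hlam (by linarith : (0:ℝ) ≤ lam)]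
      rcases le_or_gt y (0.85*K) with h7 | h7
      · have hs : (0.9:ℝ) ≤ Real.log (K/(K-y)) := by
          apply hsbound 0.4 _ (by linarith) (by norm_num)
          have : (1:ℝ)/0.4 = 5/2 := by norm_num
          rw [this]; exact log_52
        nlinarith [mul_le_mul_of_nonneg_left hs hK0.le,
          mul_le_mul_of_nonneg_right hlam (by linarith : (0:ℝ) ≤ lam)]
      · have hs : (1.01:ℝ) ≤ Real.log (K/(K-y)) := by
          apply hsbound 0.15 _ (by linarith) (by norm_num)
          have : (1:ℝ)/0.15 = 20/3 := by norm_num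
          rw [this]; exact log_203
        nlinarith [mul_le_mul_of_nonneg_left hs hK0.le,
          mul_le_mul_of_nonneg_right hlam (by linarith : (0:ℝ) ≤ lam)]
    calc (lam + 1 + y) * Real.log (1 + y) ≤ (lam + 1 + y) * lam := by
          apply mul_le_mul_of_nonneg_left hlogy_lam (by linarith)
      _ = lam * (lam + 1 + y) := by ring
      _ ≤ lam * (K * Real.log (K/(K-y))) := by
          apply mul_le_mul_of_nonneg_left key (by linarith)
      _ ≤ (lam * K + (K - y)) * Real.log (K / (K - y)) := by
          nlinarith [mul_nonneg hKy.le hs0]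

noncomputable def gfun (k : ℕ) (x : ℝ) : ℝ :=
  -Real.log x - ((k : ℝ) - 1) * Real.log ((1 - x) / ((k : ℝ) - 1)) - (k : ℝ) * Real.log k

lemma xi1_eq (k : ℕ) (hk : (1:ℝ) < (k:ℝ)) (x : ℝ) :
    xi1 k x = ((k:ℝ)/((k:ℝ)-1)) * psi k x + (1/((k:ℝ)-1)) * gfun k x := by
  have h : ((k:ℝ) - 1) ≠ 0 := by linarith
  unfold xi1 psi gfun
  field_simp
  ring

lemma psi_eq (k : ℕ) (hk : (1:ℝ) < (k:ℝ)) (x : ℝ) (hx0 : 0 < x) (hx1 : x < 1) :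
    psi k x = x * Real.log ((k:ℝ)*x) + (1-x) * Real.log ((k:ℝ)*(1-x)/((k:ℝ)-1)) := by
  have hk0 : (0:ℝ) < (k:ℝ) := by linarith
  have h1x : (0:ℝ) < 1 - x := by linarith
  have hK : (0:ℝ) < (k:ℝ) - 1 := by linarith
  unfold psi
  rw [Real.log_div (by positivity) (by positivity),
    Real.log_mul (by positivity) (by positivity),
    Real.log_div (by positivity) (by positivity),
    Real.log_mul (by positivity) (by positivity)]
  ring

lemma gfun_eq (k : ℕ) (hk : (1:ℝ) < (k:ℝ)) (x : ℝ) (hx0 : 0 < x) (hx1 : x < 1) :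
    gfun k x = ((k:ℝ)-1) * Real.log (((k:ℝ)-1)/((k:ℝ)*(1-x))) - Real.log ((k:ℝ)*x) := by
  have hk0 : (0:ℝ) < (k:ℝ) := by linarith
  have h1x : (0:ℝ) < 1 - x := by linarith
  have hK : (0:ℝ) < (k:ℝ) - 1 := by linarith
  unfold gfun
  rw [Real.log_div (by positivity) (by positivity),
    Real.log_mul (by positivity) (by positivity),
    Real.log_div (by positivity) (by positivity),
    Real.log_mul (by positivity) (by positivity)]
  ring

lemma psi_pos (k : ℕ) (hk : (1:ℝ) < (k:ℝ)) (x : ℝ) (hx : x ∈ Set.Ioo (1/(k:ℝ)) 1) :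
    0 < psi k x := by
  obtain ⟨hx1, hx2⟩ := hx
  have hk0 : (0:ℝ) < (k:ℝ) := by linarith
  have hx0 : 0 < x := lt_trans (by positivity) hx1
  have h1x : (0:ℝ) < 1 - x := by linarith
  have hkx1 : 1 < (k:ℝ)*x := by
    rw [div_lt_iff₀ hk0] at hx1; linarith
  have hkx0 : (0:ℝ) < (k:ℝ)*x := by linarith
  rw [psi_eq k hk x hx0 hx2]
  -- first term: log(kx) > 1 - 1/(kx)
  have h1 : 1 - ((k:ℝ)*x)⁻¹ < Real.log ((k:ℝ)*x) := by
    have := Real.log_lt_sub_one_of_pos (show (0:ℝ) < ((k:ℝ)*x)⁻¹ from inv_pos.mpr hkx0)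
      (by
        intro hc
        rw [inv_eq_one] at hc
        linarith)
    rw [Real.log_inv] at this
    linarith
  have h2 : 1 - ((k:ℝ)*(1-x)/((k:ℝ)-1))⁻¹ ≤ Real.log ((k:ℝ)*(1-x)/((k:ℝ)-1)) :=
    Real.one_sub_inv_le_log_of_pos (div_pos (mul_pos hk0 h1x) (by linarith))
  have e1 : x * (1 - ((k:ℝ)*x)⁻¹) = x - 1/(k:ℝ) := by
    field_simp
  have e2 : (1-x) * (1 - ((k:ℝ)*(1-x)/((k:ℝ)-1))⁻¹) = (1-x) - ((k:ℝ)-1)/(k:ℝ) := by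
    rw [inv_div]
    field_simp
  have hb1 : x * (1 - ((k:ℝ)*x)⁻¹) < x * Real.log ((k:ℝ)*x) :=
    mul_lt_mul_of_pos_left h1 hx0
  have hb2 : (1-x) * (1 - ((k:ℝ)*(1-x)/((k:ℝ)-1))⁻¹) ≤ (1-x) * Real.log ((k:ℝ)*(1-x)/((k:ℝ)-1)) :=
    mul_le_mul_of_nonneg_left h2 h1x.le
  rw [e1] at hb1
  rw [e2] at hb2
  have : x - 1/(k:ℝ) + ((1-x) - ((k:ℝ)-1)/(k:ℝ)) = 0 := by
    field_simp
    ring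
  linarith

lemma key_ineq (k : ℕ) (hk : 1000 ≤ Real.log k) (x : ℝ) (hx : x ∈ Set.Ioo (1/(k:ℝ)) 1) :
    (k:ℝ) * psi k x ≤ Real.log k * gfun k x := by
  obtain ⟨hx1, hx2⟩ := hx
  have hk1 : (1:ℝ) < (k:ℝ) := by
    by_contra hc
    push_neg at hc
    have : Real.log k ≤ 0 := Real.log_nonpos (by positivity) hc
    linarith
  have hk0 : (0:ℝ) < (k:ℝ) := by linarith
  have hx0 : 0 < x := lt_trans (by positivity) hx1
  have h1x : (0:ℝ) < 1 - x := by linarith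
  have hkx1 : 1 < (k:ℝ)*x := by rw [div_lt_iff₀ hk0] at hx1; linarith
  have hexp : Real.exp (Real.log k) = (k:ℝ) := Real.exp_log hk0
  have main := main_real (Real.log k) ((k:ℝ)-1) ((k:ℝ)*x - 1) hk
    (by rw [hexp]) (by linarith) (by nlinarith)
  rw [show (1:ℝ) + ((k:ℝ)*x - 1) = (k:ℝ)*x by ring] at main
  rw [show ((k:ℝ)-1) - ((k:ℝ)*x - 1) = (k:ℝ)*(1-x) by ring] at main
  rw [psi_eq k hk1 x hx0 hx2, gfun_eq k hk1 x hx0 hx2]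
  have hlink : Real.log ((k:ℝ)*(1-x)/((k:ℝ)-1)) = - Real.log (((k:ℝ)-1)/((k:ℝ)*(1-x))) := by
    rw [← Real.log_inv]
    congr 1
    rw [inv_div]
  rw [hlink]
  nlinarith [main]

noncomputable def lb (k : ℕ) : ℝ :=
  (k:ℝ)/((k:ℝ)-1) + (k:ℝ)/(((k:ℝ)-1)*Real.log k)

lemma k_large (k : ℕ) (hk : 1000 ≤ Real.log k) : (1001:ℝ) ≤ (k:ℝ) := by
  rcases Nat.eq_zero_or_pos k with h | h
  · subst h; simp at hk; linarith
  · have hk0 : (0:ℝ) < (k:ℝ) := by exact_mod_cast h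
    have := Real.log_le_sub_one_of_pos hk0
    linarith

lemma mem_lb (k : ℕ) (hk : 1000 ≤ Real.log k) :
    ∀ r ∈ {r : ℝ | ∃ x ∈ Set.Ioo (1/(k:ℝ)) 1, r = xi1 k x / psi k x}, lb k ≤ r := by
  rintro r ⟨x, hx, rfl⟩
  have hk1 : (1:ℝ) < (k:ℝ) := by linarith [k_large k hk]
  have hψ := psi_pos k hk1 x hx
  have hkey := key_ineq k hk x hx
  have hK : (0:ℝ) < (k:ℝ)-1 := by linarith
  have hlam : (0:ℝ) < Real.log k := by linarith
  rw [le_div_iff₀ hψ, xi1_eq k hk1 x]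
  unfold lb
  have h2 : (k:ℝ)/(((k:ℝ)-1)*Real.log k) * psi k x ≤ 1/((k:ℝ)-1) * gfun k x := by
    rw [div_mul_eq_mul_div, one_div_mul_eq_div, div_le_div_iff₀ (by positivity) hK]
    nlinarith [mul_le_mul_of_nonneg_right hkey hK.le]
  nlinarith [h2, hψ, hK]

lemma alpha1_lb (k : ℕ) (hk : 1000 ≤ Real.log k) : lb k ≤ alpha1 k := by
  have hk1 : (1:ℝ) < (k:ℝ) := by linarith [k_large k hk]
  apply le_csInf
  · refine ⟨xi1 k (1/2) / psi k (1/2), ⟨1/2, ⟨?_, by norm_num⟩, rfl⟩⟩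
    rw [div_lt_div_iff₀ (by linarith) (by norm_num)]
    linarith [k_large k hk]
  · exact mem_lb k hk

lemma alpha1_ub (k : ℕ) (hk : 1000 ≤ Real.log k) (d : ℝ) (hd : d ∈ Set.Ioo (1/(k:ℝ)) 1) :
    alpha1 k ≤ xi1 k d / psi k d :=
  csInf_le ⟨lb k, mem_lb k hk⟩ ⟨d, hd, rfl⟩

set_option maxHeartbeats 2000000 in
/-- Second-order asymptotics of the 1-log-Sobolev constant:
`α₁(k) = (k/(k−1))·(1 + (1+o(1))/log k)` as `k → ∞`. -/
theorem alpha1_asymptotics :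
    Filter.Tendsto (fun k : ℕ => Real.log (k : ℝ) * ((((k : ℝ) - 1) / (k : ℝ)) * alpha1 k - 1))
      Filter.atTop (nhds 1) := by
  have hlogev : Filter.Tendsto (fun k : ℕ => Real.log (k:ℝ)) atTop atTop :=
    Real.tendsto_log_atTop.comp tendsto_natCast_atTop_atTop
  rw [tendsto_order]
  constructor
  · intro b hb
    filter_upwards [hlogev.eventually_ge_atTop 1000] with k hk
    have hk1 : (1:ℝ) < (k:ℝ) := by linarith [k_large k hk]
    have hK : (0:ℝ) < (k:ℝ)-1 := by linarith
    have hk0 : (0:ℝ) < (k:ℝ) := by linarith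
    have hlam : (0:ℝ) < Real.log k := by linarith
    have hα := alpha1_lb k hk
    have hmono : Real.log k * ((((k:ℝ)-1)/(k:ℝ)) * lb k - 1)
        ≤ Real.log k * ((((k:ℝ)-1)/(k:ℝ)) * alpha1 k - 1) := by
      have h0 : (0:ℝ) ≤ ((k:ℝ)-1)/(k:ℝ) := by positivity
      have := mul_le_mul_of_nonneg_left hα h0
      nlinarith
    have heq : Real.log k * ((((k:ℝ)-1)/(k:ℝ)) * lb k - 1) = 1 := by
      unfold lb
      field_simp
      ring
    linarith
  · intro b hb
    set d : ℝ := min ((b-1)/8) (1/8) with hd_def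
    have hd0 : 0 < d := by
      apply lt_min (by linarith) (by norm_num)
    have hd8 : d ≤ 1/8 := min_le_right _ _
    have hdb : d ≤ (b-1)/8 := min_le_left _ _
    have h1d : (0:ℝ) < 1 - d := by linarith
    set s0 : ℝ := Real.log (1/(1-d)) with hs0_def
    have hs0_pos : 0 ≤ s0 := by
      apply Real.log_nonneg
      rw [le_div_iff₀ h1d]; linarith
    set c0 : ℝ := s0 - d * Real.log d with hc0_def
    have hc0_pos : 0 ≤ c0 := by
      have : Real.log d ≤ 0 := Real.log_nonpos hd0.le (by linarith)
      nlinarith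
    have hs0_ub : s0 ≤ d + 2*d^2 := by
      have h := Real.log_le_sub_one_of_pos (show (0:ℝ) < 1/(1-d) by positivity)
      have e : 1/(1-d) - 1 = d/(1-d) := by field_simp; ring
      rw [hs0_def]
      have h2 : d/(1-d) ≤ d + 2*d^2 := by
        rw [div_le_iff₀ h1d]; nlinarith
      linarith [e ▸ h]
    filter_upwards [hlogev.eventually_ge_atTop 1000,
      (tendsto_natCast_atTop_atTop (R := ℝ)).eventually_gt_atTop (1/d),
      hlogev.eventually_gt_atTop ((4*b*c0)/(3*d*(b-1)) + c0/d + 1)] with k hk hk2 hk3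
    have hk1 : (1:ℝ) < (k:ℝ) := by linarith [k_large k hk]
    have hK : (0:ℝ) < (k:ℝ)-1 := by linarith
    have hk0 : (0:ℝ) < (k:ℝ) := by linarith
    have hlam : (0:ℝ) < Real.log k := by linarith
    have hkd : 1 < (k:ℝ)*d := by
      rw [div_lt_iff₀ hd0] at hk2
      linarith
    have hdIoo : d ∈ Set.Ioo (1/(k:ℝ)) 1 := by
      constructor
      · rw [div_lt_iff₀ hk0]; nlinarith
      · linarith
    have hψ := psi_pos k hk1 d hdIoo
    have hub := alpha1_ub k hk d hdIoo
    -- bounds on gfun and psi at d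
    have harg_pos : (0:ℝ) < ((k:ℝ)-1)/((k:ℝ)*(1-d)) := by positivity
    have hS_pos : 0 ≤ Real.log (((k:ℝ)-1)/((k:ℝ)*(1-d))) := by
      apply Real.log_nonneg
      rw [le_div_iff₀ (by positivity)]
      nlinarith
    have hS_ub : Real.log (((k:ℝ)-1)/((k:ℝ)*(1-d))) ≤ s0 := by
      rw [hs0_def]
      apply Real.log_le_log harg_pos
      rw [div_le_div_iff₀ (by positivity) h1d]
      nlinarith
    have hm_pos : 0 ≤ Real.log ((k:ℝ)*d) := Real.log_nonneg hkd.le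
    have hg_ub : gfun k d ≤ (k:ℝ) * s0 := by
      rw [gfun_eq k hk1 d hd0 (by linarith)]
      nlinarith [hS_ub, hS_pos, hm_pos, hK]
    have hm_eq : Real.log ((k:ℝ)*d) = Real.log k + Real.log d :=
      Real.log_mul (by positivity) (by positivity)
    have hlink : Real.log ((k:ℝ)*(1-d)/((k:ℝ)-1)) = - Real.log (((k:ℝ)-1)/((k:ℝ)*(1-d))) := by
      rw [← Real.log_inv]
      congr 1
      rw [inv_div]
    have hψ_lb : d * Real.log k - c0 ≤ psi k d := by
      rw [psi_eq k hk1 d hd0 (by linarith), hm_eq, hlink, hc0_def]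
      have hstep : (1-d) * Real.log (((k:ℝ)-1)/((k:ℝ)*(1-d))) ≤ s0 := by
        nlinarith [hS_ub, hS_pos, hd0]
      nlinarith [hstep]
    -- main numeric comparison
    have hnum : Real.log k * ((k:ℝ) * s0) < b * ((k:ℝ) * (d * Real.log k - c0)) := by
      have h1 : Real.log k * (b*d - s0) > b * c0 := by
        have hb1 : 0 < b - 1 := by linarith
        have h2 : b*d - s0 ≥ (3/4) * d * (b-1) := by nlinarith
        have h3 : Real.log k * ((3/4) * d * (b-1)) > b * c0 := by
          have hpos : 0 < (3/4) * d * (b-1) := by positivity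
          have hcd : 0 ≤ c0/d := by positivity
          have : (4*b*c0)/(3*d*(b-1)) < Real.log k := by linarith
          rw [div_lt_iff₀ (by positivity)] at this
          nlinarith
        nlinarith [mul_le_mul_of_nonneg_left h2 hlam.le]
      nlinarith [hk0]
    have hψpos' : (0:ℝ) < (k:ℝ) * psi k d := by positivity
    -- conclude
    have heq : (((k:ℝ)-1)/(k:ℝ)) * (xi1 k d / psi k d) - 1 = gfun k d / ((k:ℝ) * psi k d) := by
      rw [xi1_eq k hk1 d]
      field_simp
      ring
    have hmono : Real.log (k:ℝ) * ((((k:ℝ)-1)/(k:ℝ)) * alpha1 k - 1)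
        ≤ Real.log (k:ℝ) * ((((k:ℝ)-1)/(k:ℝ)) * (xi1 k d / psi k d) - 1) := by
      have h0 : (0:ℝ) ≤ ((k:ℝ)-1)/(k:ℝ) := by positivity
      have := mul_le_mul_of_nonneg_left hub h0
      nlinarith
    have hfinal : Real.log (k:ℝ) * (gfun k d / ((k:ℝ) * psi k d)) < b := by
      rw [mul_div_assoc', div_lt_iff₀ hψpos']
      have hchain : Real.log (k:ℝ) * gfun k d ≤ Real.log (k:ℝ) * ((k:ℝ) * s0) :=
        mul_le_mul_of_nonneg_left hg_ub hlam.le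
      have hchain2 : b * ((k:ℝ) * (d * Real.log k - c0)) ≤ b * ((k:ℝ) * psi k d) := by
        have : (0:ℝ) ≤ b := by linarith
        have h5 : (k:ℝ) * (d * Real.log k - c0) ≤ (k:ℝ) * psi k d :=
          mul_le_mul_of_nonneg_left hψ_lb hk0.le
        nlinarith
      linarith
    rw [heq] at hmono
    linarith
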